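/- Let (X,•) be a locally-zero groupoid. If • is associative (i.e., (X,•) is a semigroup), then (X,•) is either the left-zero-semigroup on X (x • y = x for all x, y) or the right-zero-semigroup on X (x • y = y for all x, y). -/
import Mathlib


/-- A groupoid is locally-zero if it is idempotent and its restriction to every pair of
distinct elements is either a left-zero-semigroup or a right-zero-semigroup. -/
def LocallyZero {X : Type*} (bullet : X → X → X) : Prop :=
  (∀ x : X, bullet x x = x) ∧
  ∀ x y : X, x ≠ y →
    (bullet x y = x ∧ bullet y x = y) ∨ (bullet x y = y ∧ bullet y x = x)

/-- A locally-zero groupoid which is a semigroup is the left-zero-semigroup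
or the right-zero-semigroup. -/
theorem locallyZero_semigroup {X : Type*} (bullet : X → X → X)
    (hlz : LocallyZero bullet)
    (hassoc : ∀ x y z : X, bullet (bullet x y) z = bullet x (bullet y z)) :
    (∀ x y : X, bullet x y = x) ∨ (∀ x y : X, bullet x y = y) := by
  obtain ⟨hid, hpair⟩ := hlz
  -- Each element is either "left-type" or "right-type".
  have key : ∀ a : X, (∀ y, bullet a y = a) ∨ (∀ y, bullet a y = y) := by
    intro a
    by_contra h
    push_neg at h
    obtain ⟨⟨b, hb⟩, c, hc⟩ := h
    have hab : a ≠ b := by rintro rfl; exact hb (hid a)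
    have hac : a ≠ c := by rintro rfl; exact hc (hid a)
    -- pair (a,b) must be right-zero
    have hab2 : bullet a b = b ∧ bullet b a = a := by
      rcases hpair a b hab with h1 | h1
      · exact absurd h1.1 hb
      · exact h1
    -- pair (a,c) must be left-zero
    have hac2 : bullet a c = a ∧ bullet c a = c := by
      rcases hpair a c hac with h1 | h1
      · exact h1
      · exact absurd h1.1 hc
    have hbc : b ≠ c := by
      rintro rfl
      exact hac (hac2.1.symm.trans hab2.1)
    rcases hpair b c hbc with ⟨h1, h2⟩ | ⟨h1, h2⟩
    · -- b•c = b : use (b•c)•a = b•(c•a)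
      have := hassoc b c a
      rw [h1, hab2.2, hac2.2, h1] at this
      exact hab this
    · -- b•c = c : use (a•b)•c = a•(b•c)
      have := hassoc a b c
      rw [hab2.1, h1, hac2.1] at this
      exact hac this.symm
  by_cases hL : ∀ x y : X, bullet x y = x
  · exact Or.inl hL
  · push_neg at hL
    obtain ⟨a, b, hab⟩ := hL
    have ha : ∀ y, bullet a y = y := (key a).resolve_left fun h => hab (h b)
    right
    intro x y
    rcases key x with hx | hx
    · -- x left-type : contradiction with a right-type
      have hxa : x ≠ a := by
        rintro rfl
        exact hab (hx b)
      have h1 : bullet x a = x := hx a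
      rcases hpair x a hxa with h | h
      · -- a•x = a, but also a•x = x
        exact absurd ((h.2).symm.trans (ha x)) (fun e => hxa e.symm)
      · -- x•a = a, but also x•a = x
        exact absurd (h1.symm.trans h.1) hxa
    · exact hx y
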